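/- The distance-based mechanism dominates FCFS-F in terms of social surplus, but not vice versa: for every set N of buyers and every reported type profile θ', Σ_{i∈N} v'_i·f_i(θ') ≥ Σ_{i∈N} v'_i·f^F_i(θ'), where f is the distance-based allocation and f^F the FCFS-F allocation; moreover, there exists an instance for which the inequality is strict. -/

import Mathlib

open scoped Classical NNReal ENNReal

namespace SNA

/-- A reported type `θ'_i = (v'_i, r'_i)`: a (nonnegative) value for one unit together with
the set of followers to whom the buyer forwards the information. -/
abbrev Profile (N : Type*) := N → ℝ≥0 × Finset N

variable {N : Type*} [Fintype N] [DecidableEq N] [LinearOrder N]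

/-- `reachIn θ rs m i`: in the digraph induced by the reported profile `θ` and the
seller's direct-buyer set `rs` (the seller links to every member of `rs`, and each buyer
`j` links to every member of `(θ j).2`), there is a directed path from the seller to `i`
using exactly `m + 1` edges. -/
def reachIn (θ : Profile N) (rs : Finset N) : ℕ → N → Prop
  | 0, i => i ∈ rs
  | m + 1, i => ∃ j, reachIn θ rs m j ∧ i ∈ (θ j).2

/-- Buyer `i` is connected: reachable from the seller. -/
def Connected (θ : Profile N) (rs : Finset N) (i : N) : Prop :=
  ∃ m, reachIn θ rs m i

/-- `N̂`: the set of connected buyers. -/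
noncomputable def Nhat (θ : Profile N) (rs : Finset N) : Finset N :=
  Finset.univ.filter (Connected θ rs)

/-- `d(i)`: the length of a shortest directed path from the seller to `i`
(`⊤` if `i` is not connected). -/
noncomputable def dNet (θ : Profile N) (rs : Finset N) (i : N) : ℕ∞ :=
  sInf {n : ℕ∞ | ∃ m : ℕ, reachIn θ rs m i ∧ n = (m : ℕ∞) + 1}

/-- Reachability from the seller by a directed path that avoids buyer `j`. -/
def reachInAvoid (θ : Profile N) (rs : Finset N) (j : N) : ℕ → N → Prop
  | 0, i => i ∈ rs ∧ i ≠ j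
  | m + 1, i => ∃ a, reachInAvoid θ rs j m a ∧ i ∈ (θ a).2 ∧ i ≠ j

/-- `j` is a critical parent of `i`: both are connected, `j ≠ i`, and every directed path
from the seller to `i` passes through `j`. -/
def CriticalParent (θ : Profile N) (rs : Finset N) (j i : N) : Prop :=
  Connected θ rs i ∧ Connected θ rs j ∧ j ≠ i ∧ ¬ ∃ m, reachInAvoid θ rs j m i

/-- The descendants of `i` in the diffusion critical tree `T(θ)`, i.e. `i` together with
the connected buyers lying in the subtree of `T(θ)` rooted at `i`; the ancestors of a
buyer in the diffusion critical tree are exactly its critical parents. -/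
noncomputable def desc (θ : Profile N) (rs : Finset N) (i : N) : Finset N :=
  Finset.univ.filter fun j => Connected θ rs j ∧ (j = i ∨ CriticalParent θ rs i j)

/-- `N̂₋ᵢ`: the connected buyers with `i` and all of its descendants in the diffusion
critical tree removed. -/
noncomputable def NhatMinus (θ : Profile N) (rs : Finset N) (i : N) : Finset N :=
  Nhat θ rs \ desc θ rs i

/-- The `k'`-th highest element of a multiset of values (as an element of `ℝ≥0∞`):
`⊤` if `k' ≤ 0`, and `0` if the multiset has fewer than `k'` elements. -/
noncomputable def kthHighest (s : Multiset ℝ≥0) (k' : ℕ) : ℝ≥0∞ :=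
  if k' = 0 then ⊤
  else if s.card < k' then 0
  else ((s.sort (· ≤ ·)).getD (s.card - k') 0 : ℝ≥0)

/-- `v*(S, k')`: the `k'`-th highest reported value among the buyers in `S`. -/
noncomputable def vstar (θ : Profile N) (S : Finset N) (k' : ℕ) : ℝ≥0∞ :=
  kthHighest (S.val.map fun i => (θ i).1) k'

/-- The priority order on the connected buyers: ascending order of the distance `d(·)`,
with ties broken by the fixed linear order on `N` (mergeSort is stable). -/
noncomputable def prioList (θ : Profile N) (rs : Finset N) : List N :=
  ((Nhat θ rs).sort (· ≤ ·)).mergeSort fun i j => decide (dNet θ rs i ≤ dNet θ rs j)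

/-- One run of the distance-based mechanism over a list of buyers (in priority order),
given the current winner set `W` and the remaining number of units `k'`; `extra` is an
additional pool of (dummy) values included in every price computation.
Buyer `i` faces the price `p = v*((N̂₋ᵢ ∖ W) + extra, k')` and wins (paying `p`)
iff her reported value is at least `p`. -/
noncomputable def runAux (θ : Profile N) (rs : Finset N) (extra : Multiset ℝ≥0) :
    List N → Finset N → ℕ → (N → ℕ) × (N → ℝ≥0)
  | [], _, _ => (fun _ => 0, fun _ => 0)
  | i :: rest, W, k' =>
    let p : ℝ≥0∞ :=
      kthHighest (((NhatMinus θ rs i \ W).val.map fun j => (θ j).1) + extra) k'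
    if (((θ i).1 : ℝ≥0∞)) ≥ p then
      let out := runAux θ rs extra rest (insert i W) (k' - 1)
      (Function.update out.1 i 1, Function.update out.2 i p.toNNReal)
    else
      let out := runAux θ rs extra rest W k'
      (Function.update out.1 i 0, Function.update out.2 i 0)

/-- The distance-based mechanism: `.1` is the allocation rule `f` (each buyer is mapped
to `1` if she wins a unit and to `0` otherwise; unconnected buyers get `0`) and `.2` is
the payment rule `t` (unconnected buyers and losers pay `0`). -/
noncomputable def DBM (k : ℕ) (θ : Profile N) (rs : Finset N) : (N → ℕ) × (N → ℝ≥0) :=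
  runAux θ rs 0 (prioList θ rs) ∅ k

/-- The distance-based mechanism with reserve price `vh`: `k` dummy buyers of value `vh`,
attached directly to the seller only (hence lying in every `N̂₋ᵢ` and never being
descendants of a real buyer), are added to every price pool, but they are never processed
as bidders and never win a unit. -/
noncomputable def DBMres (k : ℕ) (vh : ℝ≥0) (θ : Profile N) (rs : Finset N) :
    (N → ℕ) × (N → ℝ≥0) :=
  runAux θ rs (Multiset.replicate k vh) (prioList θ rs) ∅ k

/-- The No-Diffusion-VCG mechanism: VCG applied to the direct buyers only. -/
noncomputable def NDVCG (k : ℕ) (θ : Profile N) (rs : Finset N) : (N → ℕ) × (N → ℝ≥0) :=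
  (fun i => if i ∈ rs ∧ (((θ i).1 : ℝ≥0∞)) ≥ vstar θ (rs.erase i) k then 1 else 0,
   fun i => if i ∈ rs ∧ (((θ i).1 : ℝ≥0∞)) ≥ vstar θ (rs.erase i) k
     then (vstar θ (rs.erase i) k).toNNReal else 0)

/-- The FCFS-F mechanism: the first `k` connected buyers in the priority order get a
unit for free. -/
noncomputable def FCFS (k : ℕ) (θ : Profile N) (rs : Finset N) : (N → ℕ) × (N → ℝ≥0) :=
  (fun i => if i ∈ (prioList θ rs).take k then 1 else 0, fun _ => 0)




section AuxProof

lemma kthHighest_ne_top {s : Multiset ℝ≥0} {k' : ℕ} (hk : k' ≠ 0) : kthHighest s k' ≠ ⊤ := by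
  unfold kthHighest
  rw [if_neg hk]
  split_ifs <;> simp

lemma card_le_of_kth_ne_zero {s : Multiset ℝ≥0} {k' : ℕ} (hk : k' ≠ 0)
    (h : kthHighest s k' ≠ 0) : k' ≤ s.card := by
  by_contra hc
  push_neg at hc
  apply h
  unfold kthHighest
  rw [if_neg hk, if_pos hc]

lemma kth_filter_card {s : Multiset ℝ≥0} {k' : ℕ} (hk : k' ≠ 0) (hc : k' ≤ s.card) :
    ∃ v : ℝ≥0, kthHighest s k' = (v : ℝ≥0∞) ∧
      k' ≤ (s.filter (fun x => v ≤ x)).card := by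
  classical
  set l := s.sort (· ≤ ·) with hl
  have hsort : l.Pairwise (· ≤ ·) := Multiset.pairwise_sort s _
  have hlen : l.length = s.card := Multiset.length_sort _
  have hidx : s.card - k' < l.length := by omega
  set v : ℝ≥0 := l.getD (s.card - k') 0 with hv
  refine ⟨v, ?_, ?_⟩
  · unfold kthHighest
    rw [if_neg hk, if_neg (by omega)]
  · -- all elements of l.drop (s.card - k') are ≥ v, and there are k' of them
    have hvg : v = l.get ⟨s.card - k', hidx⟩ := by
      rw [hv, List.getD_eq_getElem l 0 hidx]; rfl
    have hdrop : ∀ x ∈ l.drop (s.card - k'), v ≤ x := by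
      intro x hx
      rw [List.mem_iff_getElem] at hx
      obtain ⟨j, hj, rfl⟩ := hx
      rw [List.getElem_drop]
      rw [hvg]
      have hj2 := hj
      rw [List.length_drop] at hj2
      have hjl : s.card - k' + j < l.length := by omega
      rcases Nat.eq_zero_or_pos j with hj0 | hj0
      · subst hj0; simp [List.get_eq_getElem]
      · have := hsort.rel_get_of_lt (a := ⟨s.card - k', hidx⟩) (b := ⟨s.card - k' + j, hjl⟩)
          (by simp only [Fin.mk_lt_mk]; omega)
        simpa [List.get_eq_getElem] using this
    have : (s.filter (fun x => v ≤ x)).card = (l.filter (fun x => v ≤ x)).length := by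
      have : (l : Multiset ℝ≥0) = s := Multiset.sort_eq s _
      rw [← this, Multiset.filter_coe, Multiset.coe_card]
    rw [this]
    calc k' = (l.drop (s.card - k')).length := by
              rw [List.length_drop]; omega
      _ = ((l.drop (s.card - k')).filter (fun x => decide (v ≤ x))).length := by
              rw [List.filter_eq_self.2]
              intro a ha; exact decide_eq_true (hdrop a ha)
      _ ≤ (l.filter (fun x => v ≤ x)).length := by
              conv_rhs => rw [← List.take_append_drop (s.card - k') l]
              rw [List.filter_append, List.length_append]
              omega

lemma le_kth_of_filter_card {s : Multiset ℝ≥0} {k' : ℕ} {c : ℝ≥0} (hk : k' ≠ 0)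
    (h : k' ≤ (s.filter (fun x => c ≤ x)).card) : (c : ℝ≥0∞) ≤ kthHighest s k' := by
  classical
  have hcard : k' ≤ s.card := le_trans h (Multiset.card_le_card (Multiset.filter_le _ s))
  set l := s.sort (· ≤ ·) with hl
  have hsort : l.Pairwise (· ≤ ·) := Multiset.pairwise_sort s _
  have hlen : l.length = s.card := Multiset.length_sort _
  have hidx : s.card - k' < l.length := by omega
  set v : ℝ≥0 := l.getD (s.card - k') 0 with hv
  have hkth : kthHighest s k' = (v : ℝ≥0∞) := by
    unfold kthHighest
    rw [if_neg hk, if_neg (by omega)]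
  rw [hkth, ENNReal.coe_le_coe]
  by_contra hvc
  push_neg at hvc   -- v < c
  have hvg : v = l.get ⟨s.card - k', hidx⟩ := by
    rw [hv, List.getD_eq_getElem l 0 hidx]; rfl
  -- all elements ≥ c live in drop (s.card - k' + 1), of length k'-1
  have htake : ∀ x ∈ l.take (s.card - k' + 1), ¬ (c ≤ x) := by
    intro x hx
    rw [List.mem_iff_getElem] at hx
    obtain ⟨j, hj, rfl⟩ := hx
    rw [List.getElem_take]
    have hjl : j < l.length := by
      simp only [List.length_take] at hj; omega
    have hle : l[j] ≤ v := by
      rw [hvg]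
      rcases Nat.lt_or_ge j (s.card - k') with hj2 | hj2
      · have := hsort.rel_get_of_lt (a := ⟨j, hjl⟩) (b := ⟨s.card - k', hidx⟩)
          (by simp only [Fin.mk_lt_mk]; omega)
        simpa [List.get_eq_getElem] using this
      · have : j = s.card - k' := by
          simp only [List.length_take] at hj; omega
        subst this; simp [List.get_eq_getElem]
    intro hcx
    exact absurd (le_trans hcx hle) (not_le.2 hvc)
  have hfl : (s.filter (fun x => c ≤ x)).card = (l.filter (fun x => c ≤ x)).length := by
    have : (l : Multiset ℝ≥0) = s := Multiset.sort_eq s _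
    rw [← this, Multiset.filter_coe, Multiset.coe_card]
  rw [hfl] at h
  have : (l.filter (fun x => c ≤ x)).length ≤ k' - 1 := by
    conv_lhs => rw [← List.take_append_drop (s.card - k' + 1) l]
    rw [List.filter_append, List.length_append]
    have h1 : (List.filter (fun x => decide (c ≤ x)) (l.take (s.card - k' + 1))).length = 0 := by
      rw [List.length_eq_zero_iff, List.filter_eq_nil_iff]
      intro a ha
      simpa using htake a ha
    have h2 : (List.filter (fun x => decide (c ≤ x)) (l.drop (s.card - k' + 1))).length
        ≤ (l.drop (s.card - k' + 1)).length := List.length_filter_le _ _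
    rw [List.length_drop] at h2
    omega
  omega

lemma filter_map_card (Q : Finset N) (val : N → ℝ≥0) (c : ℝ≥0) :
    ((Q.val.map val).filter (fun x => c ≤ x)).card = (Q.filter (fun b => c ≤ val b)).card := by
  classical
  rw [Multiset.filter_map]
  rw [Multiset.card_map]
  rfl

lemma le_kth_of_subset (Q S : Finset N) (val : N → ℝ≥0) {c : ℝ≥0} {k' : ℕ} (hk : k' ≠ 0)
    (hS : S ⊆ Q) (hcard : k' ≤ S.card) (hval : ∀ b ∈ S, c ≤ val b) :
    (c : ℝ≥0∞) ≤ kthHighest (Q.val.map val) k' := by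
  classical
  apply le_kth_of_filter_card hk
  rw [filter_map_card]
  refine le_trans hcard (Finset.card_le_card ?_)
  intro b hb
  exact Finset.mem_filter.2 ⟨hS hb, hval b hb⟩

lemma kth_witness (Q : Finset N) (val : N → ℝ≥0) {k' : ℕ} (hk : k' ≠ 0)
    (h0 : kthHighest (Q.val.map val) k' ≠ 0) :
    ∃ v : ℝ≥0, kthHighest (Q.val.map val) k' = (v : ℝ≥0∞) ∧
      k' ≤ (Q.filter (fun b => v ≤ val b)).card := by
  classical
  have hc : k' ≤ Q.card := by
    have := card_le_of_kth_ne_zero hk h0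
    rwa [Multiset.card_map] at this
  obtain ⟨v, hv, hcnt⟩ := kth_filter_card (s := Q.val.map val) hk (by rwa [Multiset.card_map])
  exact ⟨v, hv, by rwa [filter_map_card] at hcnt⟩

lemma kth_le_kth_erase (Q : Finset N) (val : N → ℝ≥0) (b : N) {k' : ℕ} (hk : k' ≠ 0) :
    kthHighest (Q.val.map val) k' ≤ kthHighest ((Q.erase b).val.map val) (k' - 1) := by
  classical
  rcases Nat.eq_zero_or_pos (k' - 1) with h1 | h1
  · rw [h1]; unfold kthHighest; rw [if_pos rfl]; exact le_top
  by_cases h0 : kthHighest (Q.val.map val) k' = 0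
  · rw [h0]; exact zero_le
  obtain ⟨v, hv, hcnt⟩ := kth_witness Q val hk h0
  rw [hv]
  apply le_kth_of_filter_card (by omega)
  rw [filter_map_card]
  rw [Finset.filter_erase]
  have := Finset.card_erase_le (s := Q.filter (fun a => v ≤ val a)) (a := b)
  have h2 : (Q.filter (fun a => v ≤ val a)).card - 1 ≤ ((Q.filter (fun a => v ≤ val a)).erase b).card := by
    exact Finset.pred_card_le_card_erase
  omega

variable {θ : Profile N} {rs : Finset N}

lemma reachIn_avoid_or (i : N) :
    ∀ m u, reachIn θ rs m u → u ≠ i →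
      reachInAvoid θ rs i m u ∨ ∃ m' : ℕ, m' < m ∧ reachIn θ rs m' i := by
  intro m
  induction m with
  | zero => intro u hu hne; exact Or.inl ⟨hu, hne⟩
  | succ m ih =>
    intro u hu hne
    obtain ⟨j, hj, hmem⟩ := hu
    by_cases hji : j = i
    · subst hji; exact Or.inr ⟨m, Nat.lt_succ_self m, hj⟩
    · rcases ih j hj hji with h | ⟨m', hm', hr⟩
      · exact Or.inl ⟨j, h, hmem, hne⟩
      · exact Or.inr ⟨m', Nat.lt_succ_of_lt hm', hr⟩

lemma dNet_le_succ {i : N} {m : ℕ} (h : reachIn θ rs m i) :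
    dNet θ rs i ≤ (m : ℕ∞) + 1 :=
  sInf_le ⟨m, h, rfl⟩

lemma dNet_lt_of_criticalParent {i u : N} (h : CriticalParent θ rs i u) :
    dNet θ rs i < dNet θ rs u := by
  obtain ⟨hcu, hci, hne, hnav⟩ := h
  classical
  have hex : ∃ m, reachIn θ rs m u := hcu
  let m := Nat.find hex
  have hm : reachIn θ rs m u := Nat.find_spec hex
  rcases reachIn_avoid_or i m u hm (Ne.symm hne) with hav | ⟨m', hm', hr⟩
  · exact absurd ⟨m, hav⟩ hnav
  have h1 : dNet θ rs i ≤ (m' : ℕ∞) + 1 := dNet_le_succ hr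
  have h2 : ((m : ℕ) : ℕ∞) + 1 ≤ dNet θ rs u := by
    apply le_sInf
    rintro n ⟨m'', hm'', rfl⟩
    have : m ≤ m'' := Nat.find_min' hex hm''
    exact_mod_cast add_le_add_left (by exact_mod_cast this) 1
  have h3 : (m' : ℕ∞) + 1 < (m : ℕ∞) + 1 := by
    have : ((m' + 1 : ℕ) : ℕ∞) < ((m + 1 : ℕ) : ℕ∞) := by
      exact_mod_cast Nat.succ_lt_succ hm'
    simpa using this
  exact lt_of_le_of_lt h1 (lt_of_lt_of_le h3 h2)

lemma mem_prioList {a : N} : a ∈ prioList θ rs ↔ a ∈ Nhat θ rs := by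
  unfold prioList
  rw [List.mem_mergeSort, Finset.mem_sort]

lemma prioList_nodup : (prioList θ rs).Nodup := by
  unfold prioList
  exact ((List.mergeSort_perm _ _).nodup_iff).2 (Finset.sort_nodup _ _)

lemma prioList_sorted :
    (prioList θ rs).Pairwise (fun a b => dNet θ rs a ≤ dNet θ rs b) := by
  have h := List.pairwise_mergeSort
      (le := fun i j => decide (dNet θ rs i ≤ dNet θ rs j))
      (fun a b c hab hbc => by
        simp only [decide_eq_true_eq] at *
        exact le_trans hab hbc)
      (fun a b => by
        simp only [Bool.or_eq_true, decide_eq_true_eq]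
        exact le_total _ _)
      ((Nhat θ rs).sort (· ≤ ·))
  unfold prioList
  exact h.imp (fun hab => by simpa using hab)

lemma not_mem_desc_of_before {done rest : List N} {i u : N}
    (hp : prioList θ rs = done ++ i :: rest) (hu : u ∈ done) :
    u ∉ desc θ rs i := by
  intro hmem
  have hnd : (prioList θ rs).Nodup := prioList_nodup
  have hne : u ≠ i := by
    rw [hp] at hnd
    rcases List.nodup_append.1 hnd with ⟨_, h2, hdisj⟩
    intro h; subst h
    exact hdisj _ hu _ List.mem_cons_self rfl
  have hcp : CriticalParent θ rs i u := by
    simp only [desc, Finset.mem_filter] at hmem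
    rcases hmem.2.2 with h | h
    · exact absurd h hne
    · exact h
  have hlt : dNet θ rs i < dNet θ rs u := dNet_lt_of_criticalParent hcp
  have hle : dNet θ rs u ≤ dNet θ rs i := by
    have hs := prioList_sorted (θ := θ) (rs := rs)
    rw [hp] at hs
    rcases List.pairwise_append.1 hs with ⟨_, _, hcross⟩
    exact hcross u hu i List.mem_cons_self
  exact absurd hlt (not_lt.2 hle)

lemma runAux_fst_eq_zero (ex : Multiset ℝ≥0) :
    ∀ (L : List N) (W : Finset N) (k' : ℕ) (j : N), j ∉ L →
      (runAux θ rs ex L W k').1 j = 0 := by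
  intro L
  induction L with
  | nil => intro W k' j _; rfl
  | cons i rest ih =>
    intro W k' j hj
    have hji : j ≠ i := fun h => hj (h ▸ List.mem_cons_self)
    have hjr : j ∉ rest := fun h => hj (List.mem_cons_of_mem _ h)
    simp only [runAux]
    split
    · simp [Function.update_of_ne hji, ih _ _ _ hjr]
    · simp [Function.update_of_ne hji, ih _ _ _ hjr]

lemma sum_mul_update (val : N → ℝ≥0) (g : N → ℕ) (i : N) (c : ℕ) (hgi : g i = 0) :
    ∑ j, val j * ((Function.update g i c j : ℕ) : ℝ≥0)
      = val i * c + ∑ j, val j * (g j : ℝ≥0) := by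
  classical
  have hF : (fun j => val j * ((Function.update g i c j : ℕ) : ℝ≥0))
      = Function.update (fun j => val j * (g j : ℝ≥0)) i (val i * c) := by
    funext j
    by_cases hj : j = i
    · subst hj; simp
    · simp [Function.update_of_ne hj]
  rw [hF, Finset.sum_update_of_mem (Finset.mem_univ i)]
  have : ∑ j, val j * (g j : ℝ≥0)
      = val i * (g i : ℝ≥0) + ∑ j ∈ Finset.univ \ {i}, val j * (g j : ℝ≥0) := by
    exact Finset.sum_eq_add_sum_sdiff_singleton_of_mem (Finset.mem_univ i) _
  rw [this, hgi]
  simp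

lemma surplus_cons_win (ex : Multiset ℝ≥0) {i : N} {rest : List N} {W : Finset N} {k' : ℕ}
    (hi : i ∉ rest)
    (h : (((θ i).1 : ℝ≥0∞)) ≥ kthHighest (((NhatMinus θ rs i \ W).val.map fun j => (θ j).1) + ex) k') :
    ∑ j, (θ j).1 * (((runAux θ rs ex (i :: rest) W k').1 j : ℕ) : ℝ≥0)
      = (θ i).1 + ∑ j, (θ j).1 * (((runAux θ rs ex rest (insert i W) (k' - 1)).1 j : ℕ) : ℝ≥0) := by
  have hz : (runAux θ rs ex rest (insert i W) (k' - 1)).1 i = 0 :=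
    runAux_fst_eq_zero ex rest _ _ i hi
  simp only [runAux]
  rw [if_pos h]
  simp only []
  rw [sum_mul_update _ _ _ _ hz]
  simp

lemma surplus_cons_lose (ex : Multiset ℝ≥0) {i : N} {rest : List N} {W : Finset N} {k' : ℕ}
    (hi : i ∉ rest)
    (h : ¬ ((((θ i).1 : ℝ≥0∞)) ≥ kthHighest (((NhatMinus θ rs i \ W).val.map fun j => (θ j).1) + ex) k')) :
    ∑ j, (θ j).1 * (((runAux θ rs ex (i :: rest) W k').1 j : ℕ) : ℝ≥0)
      = ∑ j, (θ j).1 * (((runAux θ rs ex rest W k').1 j : ℕ) : ℝ≥0) := by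
  have hz : (runAux θ rs ex rest W k').1 i = 0 :=
    runAux_fst_eq_zero ex rest _ _ i hi
  simp only [runAux]
  rw [if_neg h]
  simp only []
  rw [sum_mul_update _ _ _ _ hz]
  simp

lemma self_mem_desc (i : N) (hc : Connected θ rs i) : i ∈ desc θ rs i := by
  simp [desc, hc]

lemma not_mem_NhatMinus_self (i : N) : i ∉ NhatMinus θ rs i := by
  unfold NhatMinus
  intro h
  rw [Finset.mem_sdiff] at h
  obtain ⟨h1, h2⟩ := h
  rw [Nhat, Finset.mem_filter] at h1
  exact h2 (self_mem_desc i h1.2)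

lemma NhatMinus_subset_Nhat (i : N) : NhatMinus θ rs i ⊆ Nhat θ rs :=
  Finset.sdiff_subset

lemma exists_candidate {done rest : List N} {i : N} {W : Finset N} {k' : ℕ} (hk : k' ≠ 0)
    (hp : prioList θ rs = done ++ i :: rest)
    (hW : ∀ b ∈ W, b ∈ done)
    (hC4 : ∀ j ∈ done, j ∉ W → ((θ j).1 : ℝ≥0∞) <
        kthHighest ((NhatMinus θ rs j \ W).val.map fun b => (θ b).1) k')
    (hlose : ((θ i).1 : ℝ≥0∞) <
        kthHighest ((NhatMinus θ rs i \ W).val.map fun b => (θ b).1) k')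
    (H : Finset N) (hH : H.card ≤ k' - 1) :
    ∃ c, c ∈ rest ∧ c ∉ H ∧
      kthHighest ((NhatMinus θ rs i \ W).val.map fun b => (θ b).1) k' ≤ ((θ c).1 : ℝ≥0∞) := by
  classical
  set p := kthHighest ((NhatMinus θ rs i \ W).val.map fun b => (θ b).1) k' with hpdef
  have hpne : p ≠ 0 := by
    intro h0
    rw [h0] at hlose
    exact absurd hlose (by simp)
  have hnodup : (prioList θ rs).Nodup := prioList_nodup
  have hmemP : ∀ b : N, b ∈ Nhat θ rs → b ∈ done ∨ b = i ∨ b ∈ rest := by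
    intro b hb
    have : b ∈ prioList θ rs := mem_prioList.2 hb
    rw [hp] at this
    rcases List.mem_append.1 this with h | h
    · exact Or.inl h
    · rcases List.mem_cons.1 h with h | h
      · exact Or.inr (Or.inl h)
      · exact Or.inr (Or.inr h)
  -- the set of "big" processed losers
  set BL := (done.toFinset \ W).filter (fun l => p ≤ ((θ l).1 : ℝ≥0∞)) with hBLdef
  -- key step : produce a Finset S ⊆ rest with card ≥ k' and values ≥ p
  have hmain : ∃ S : Finset N, k' ≤ S.card ∧ (∀ b ∈ S, b ∈ rest) ∧
      (∀ b ∈ S, p ≤ ((θ b).1 : ℝ≥0∞)) := by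
    rcases Finset.eq_empty_or_nonempty BL with hBL | hBL
    · -- no big losers: the pool itself works
      obtain ⟨v, hv, hcnt⟩ := kth_witness (NhatMinus θ rs i \ W) (fun b => (θ b).1) hk hpne
      refine ⟨(NhatMinus θ rs i \ W).filter (fun b => v ≤ (θ b).1), hcnt, ?_, ?_⟩
      · intro b hb
        rw [Finset.mem_filter, Finset.mem_sdiff] at hb
        obtain ⟨⟨hbA, hbW⟩, hbv⟩ := hb
        have hv' : p = (v : ℝ≥0∞) := by rw [hpdef]; exact hv
        have hbig : p ≤ ((θ b).1 : ℝ≥0∞) := by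
          rw [hv']; exact_mod_cast hbv
        rcases hmemP b (NhatMinus_subset_Nhat i hbA) with h | h | h
        · exfalso
          have : b ∈ BL := by
            rw [hBLdef, Finset.mem_filter, Finset.mem_sdiff, List.mem_toFinset]
            exact ⟨⟨h, hbW⟩, hbig⟩
          rw [hBL] at this
          exact absurd this (Finset.notMem_empty b)
        · exfalso
          subst h
          exact absurd hbig (not_le.2 hlose)
        · exact h
      · intro b hb
        rw [Finset.mem_filter] at hb
        have hv' : p = (v : ℝ≥0∞) := by rw [hpdef]; exact hv
        rw [hv']; exact_mod_cast hb.2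
    · -- take the max-value big loser
      obtain ⟨l, hlmem, hlmax⟩ := Finset.exists_max_image BL (fun b => (θ b).1) hBL
      have hl : l ∈ done ∧ l ∉ W ∧ p ≤ ((θ l).1 : ℝ≥0∞) := by
        rw [hBLdef, Finset.mem_filter, Finset.mem_sdiff, List.mem_toFinset] at hlmem
        exact ⟨hlmem.1.1, hlmem.1.2, hlmem.2⟩
      have hql := hC4 l hl.1 hl.2.1
      set q := kthHighest ((NhatMinus θ rs l \ W).val.map fun b => (θ b).1) k' with hqdef
      have hqne : q ≠ 0 := by
        intro h0; rw [h0] at hql; exact absurd hql (by simp)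
      obtain ⟨v, hv, hcnt⟩ := kth_witness (NhatMinus θ rs l \ W) (fun b => (θ b).1) hk hqne
      refine ⟨(NhatMinus θ rs l \ W).filter (fun b => v ≤ (θ b).1), hcnt, ?_, ?_⟩
      · intro b hb
        rw [Finset.mem_filter, Finset.mem_sdiff] at hb
        obtain ⟨⟨hbA, hbW⟩, hbv⟩ := hb
        have hv' : q = (v : ℝ≥0∞) := by rw [hqdef]; exact hv
        have hbq : q ≤ ((θ b).1 : ℝ≥0∞) := by
          rw [hv']; exact_mod_cast hbv
        have hbgtl : ((θ l).1 : ℝ≥0∞) < ((θ b).1 : ℝ≥0∞) := lt_of_lt_of_le hql hbq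
        have hbig : p ≤ ((θ b).1 : ℝ≥0∞) := le_trans hl.2.2 (le_of_lt hbgtl)
        rcases hmemP b (NhatMinus_subset_Nhat l hbA) with h | h | h
        · exfalso
          have hbBL : b ∈ BL := by
            rw [hBLdef, Finset.mem_filter, Finset.mem_sdiff, List.mem_toFinset]
            exact ⟨⟨h, hbW⟩, hbig⟩
          have := hlmax b hbBL
          rw [ENNReal.coe_lt_coe] at hbgtl
          exact absurd this (not_le.2 hbgtl)
        · exfalso
          subst h
          exact absurd hbig (not_le.2 hlose)
        · exact h
      · intro b hb
        rw [Finset.mem_filter, Finset.mem_sdiff] at hb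
        have hv' : q = (v : ℝ≥0∞) := by rw [hqdef]; exact hv
        have hbq : q ≤ ((θ b).1 : ℝ≥0∞) := by
          rw [hv']; exact_mod_cast hb.2
        exact le_trans hl.2.2 (le_of_lt (lt_of_lt_of_le hql hbq))
  obtain ⟨S, hScard, hSrest, hSval⟩ := hmain
  have hnotsub : ¬ S ⊆ H := by
    intro hsub
    have := Finset.card_le_card hsub
    omega
  obtain ⟨c, hcS, hcH⟩ := Finset.not_subset.1 hnotsub
  exact ⟨c, hSrest c hcS, hcH, hSval c hcS⟩

lemma kthHighest_zero (s : Multiset ℝ≥0) : kthHighest s 0 = ⊤ := if_pos rfl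

variable {θ : Profile N} {rs : Finset N}

/-- The grand induction: pairs are (target value, holder, witness, isOriginal). -/
lemma core (k : ℕ) :
    ∀ (L : List N), ∀ (done : List N) (W : Finset N) (k' : ℕ)
      (T : List (ℝ≥0 × N × N × Bool)),
      prioList θ rs = done ++ L →
      (∀ b ∈ W, b ∈ done) →
      T.length ≤ k' →
      (∀ P ∈ T, P.2.1 ∈ L ∧ P.1 ≤ (θ P.2.1).1) →
      (∀ P ∈ T, P.2.2.2 = false → P.2.2.1 ∈ done ∧ P.2.2.1 ∉ W ∧ P.1 ≤ (θ P.2.2.1).1) →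
      (T.Pairwise fun P Q => P.2.1 ≠ Q.2.1 ∧
        (P.2.2.2 = false → Q.2.2.2 = false → P.2.2.1 ≠ Q.2.2.1)) →
      (∀ P ∈ T, P.2.2.2 = true → P.2.1 ∈ (prioList θ rs).take k) →
      ((∃ P ∈ T, P.2.2.2 = true) → ∀ b ∈ (prioList θ rs).take k,
          b ∈ done ∨ ∃ P ∈ T, P.2.1 = b) →
      (∀ j ∈ done, j ∉ W → ((θ j).1 : ℝ≥0∞) <
          kthHighest ((NhatMinus θ rs j \ W).val.map fun b => (θ b).1) k') →
      (T.map fun P => P.1).sum ≤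
        ∑ j, (θ j).1 * (((runAux θ rs 0 L W k').1 j : ℕ) : ℝ≥0) := by
  intro L
  induction L with
  | nil =>
    intro done W k' T hp hW hlen hIb hIc hId hIe hIf hIg
    have : T = [] := by
      cases T with
      | nil => rfl
      | cons P T' => exact absurd ((hIb P List.mem_cons_self).1) List.not_mem_nil
    subst this
    simp
  | cons i rest ih =>
    intro done W k' T hp hW hlen hIb hIc hId hIe hIf hIg
    -- basic structural facts
    have hnodup : (prioList θ rs).Nodup := prioList_nodup
    have hnd2 := hnodup
    rw [hp] at hnd2
    rcases List.nodup_append.1 hnd2 with ⟨hndDone, hndCons, hdisj⟩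
    have hiDone : i ∉ done := fun h => hdisj _ h _ List.mem_cons_self rfl
    have hiRest : i ∉ rest := (List.nodup_cons.1 hndCons).1
    have hiW : i ∉ W := fun h => hiDone (hW i h)
    -- names
    by_cases hwin : (((θ i).1 : ℝ≥0∞)) ≥
        kthHighest (((NhatMinus θ rs i \ W).val.map fun j => (θ j).1) + 0) k'
    · -- i wins
      rw [add_zero] at hwin
      have hk' : k' ≠ 0 := by
        intro h0
        rw [h0] at hwin
        rw [kthHighest_zero] at hwin
        exact absurd (top_le_iff.1 hwin) (by simp)
      have hsum := surplus_cons_win (θ := θ) (rs := rs) 0 hiRest (by rw [add_zero]; exact hwin)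
      rw [hsum]
      -- C4 transfer to the new state
      have hIg' : ∀ j ∈ done ++ [i], j ∉ insert i W → ((θ j).1 : ℝ≥0∞) <
          kthHighest ((NhatMinus θ rs j \ insert i W).val.map fun b => (θ b).1) (k' - 1) := by
        intro j hj hjW
        have hjne : j ≠ i := fun h => hjW (h ▸ Finset.mem_insert_self i W)
        have hjdone : j ∈ done := by
          rcases List.mem_append.1 hj with h | h
          · exact h
          · exact absurd (List.mem_singleton.1 h) hjne
        have hjW' : j ∉ W := fun h => hjW (Finset.mem_insert_of_mem h)
        have h1 := hIg j hjdone hjW'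
        have h2 : NhatMinus θ rs j \ insert i W = (NhatMinus θ rs j \ W).erase i := by
          ext a
          simp only [Finset.mem_sdiff, Finset.mem_insert, Finset.mem_erase]
          tauto
        rw [h2]
        exact lt_of_lt_of_le h1 (kth_le_kth_erase _ _ i hk')
      have hp' : prioList θ rs = (done ++ [i]) ++ rest := by
        rw [hp, List.append_assoc]; rfl
      have hW' : ∀ b ∈ insert i W, b ∈ done ++ [i] := by
        intro b hb
        rcases Finset.mem_insert.1 hb with h | h
        · subst h; exact List.mem_append_right _ (List.mem_singleton_self _)
        · exact List.mem_append_left _ (hW b h)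
      -- common facts about T
      have hTnodup : T.Nodup :=
        hId.imp_of_mem (fun _ _ h => fun heq => h.1 (by rw [heq]))
      have hHolderNe : ∀ P ∈ T, ∀ Q ∈ T, P ≠ Q → P.2.1 ≠ Q.2.1 := by
        have hpw : T.Pairwise (fun P Q => P.2.1 ≠ Q.2.1) := hId.imp (fun h => h.1)
        intro P hP Q hQ hne
        haveI : Std.Symm (fun P Q : ℝ≥0 × N × N × Bool => P.2.1 ≠ Q.2.1) := ⟨fun _ _ h => Ne.symm h⟩
        exact hpw.forall hP hQ hne
      have htakei : ∀ m, m ∈ (prioList θ rs).take k → m ∈ i :: rest →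
          i ∈ (prioList θ rs).take k := by
        intro m hmk hmc
        rw [hp, List.take_append] at hmk ⊢
        rcases List.mem_append.1 hmk with h | h
        · exact absurd hmc (fun hc => hdisj _ (List.mem_of_mem_take h) _ hc rfl)
        · apply List.mem_append_right
          obtain ⟨n', hn'⟩ : ∃ n', k - done.length = n' + 1 := by
            rcases Nat.eq_zero_or_pos (k - done.length) with h0 | h0
            · rw [h0] at h; exact absurd h List.not_mem_nil
            · exact ⟨k - done.length - 1, by omega⟩
          rw [hn', List.take_succ_cons]
          exact List.mem_cons_self
      by_cases hhold : ∃ P ∈ T, P.2.1 = i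
      · -- case A1 : i is a holder
        obtain ⟨P0, hP0mem, hP0i⟩ := hhold
        obtain ⟨T1, T2, hTsplit⟩ := List.append_of_mem hP0mem
        have hperm : T.Perm (P0 :: (T1 ++ T2)) := by
          rw [hTsplit]; exact List.perm_middle
        have hsubT : (T1 ++ T2).Sublist T := by
          rw [hTsplit]
          exact (List.sublist_cons_self P0 T2).append_left T1
        have hP0notT' : P0 ∉ T1 ++ T2 := by
          have hnd := hTnodup
          rw [hTsplit, List.nodup_append] at hnd
          obtain ⟨h1, h2, h3⟩ := hnd
          intro hmem
          rcases List.mem_append.1 hmem with h | h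
          · exact h3 _ h _ List.mem_cons_self rfl
          · exact (List.nodup_cons.1 h2).1 h
        have hlenT : T.length = (T1 ++ T2).length + 1 := by
          rw [hTsplit]; simp [List.length_append]; omega
        have hmem' : ∀ Q ∈ T1 ++ T2, Q ∈ T := fun Q hQ => hsubT.subset hQ
        have hQne : ∀ Q ∈ T1 ++ T2, Q ≠ P0 := fun Q hQ heq => hP0notT' (heq ▸ hQ)
        have hback : ∀ Q ∈ T, Q ≠ P0 → Q ∈ T1 ++ T2 := by
          intro Q hQ hne
          rw [hTsplit] at hQ
          rcases List.mem_append.1 hQ with h | h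
          · exact List.mem_append_left _ h
          · rcases List.mem_cons.1 h with h' | h'
            · exact absurd h' hne
            · exact List.mem_append_right _ h'
        have hIH := ih (done ++ [i]) (insert i W) (k' - 1) (T1 ++ T2) hp' hW'
          (by omega)
          (by
            intro P hP
            have hPT := hmem' P hP
            have h1 := hIb P hPT
            refine ⟨?_, h1.2⟩
            rcases List.mem_cons.1 h1.1 with h | h
            · exact absurd (by rw [h, hP0i] : P.2.1 = P0.2.1)
                (hHolderNe P hPT P0 hP0mem (hQne P hP))
            · exact h)
          (by
            intro P hP hPf
            obtain ⟨h1, h2, h3⟩ := hIc P (hmem' P hP) hPf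
            refine ⟨List.mem_append_left _ h1, ?_, h3⟩
            intro hcon
            rcases Finset.mem_insert.1 hcon with h | h
            · exact hiDone (h ▸ h1)
            · exact h2 h)
          (hId.sublist hsubT)
          (fun P hP => hIe P (hmem' P hP))
          (by
            rintro ⟨P, hP, hPt⟩ b hb
            rcases hIf ⟨P, hmem' P hP, hPt⟩ b hb with h | ⟨Q, hQ, hQb⟩
            · exact Or.inl (List.mem_append_left _ h)
            · by_cases hQP0 : Q = P0
              · subst hQP0
                rw [hP0i] at hQb
                exact Or.inl (List.mem_append_right _ (hQb ▸ List.mem_singleton_self i))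
              · exact Or.inr ⟨Q, hback Q hQ hQP0, hQb⟩)
          hIg'
        have hsums : ((T.map fun P => P.1).sum : ℝ≥0)
            = P0.1 + ((T1 ++ T2).map fun P => P.1).sum := by
          rw [(hperm.map (fun P => P.1)).sum_eq, List.map_cons, List.sum_cons]
        rw [hsums]
        have hP0x : P0.1 ≤ (θ i).1 := by
          have := (hIb P0 hP0mem).2
          rwa [hP0i] at this
        exact add_le_add hP0x hIH
      · -- i not a holder
        by_cases hTfull : T.length = k'
        · -- case A3
          have hTne : T ≠ [] := by
            rintro rfl
            exact hk' (by simpa using hTfull.symm)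
          have hall : ∀ P ∈ T, P.2.2.2 = false := by
            by_contra hcon
            push_neg at hcon
            obtain ⟨P, hP, hPt⟩ := hcon
            rw [Bool.ne_false_iff] at hPt
            have hik : i ∈ (prioList θ rs).take k :=
              htakei P.2.1 (hIe P hP hPt) (hIb P hP).1
            rcases hIf ⟨P, hP, hPt⟩ i hik with h | ⟨Q, hQ, hQi⟩
            · exact hiDone h
            · exact hhold ⟨Q, hQ, hQi⟩
          have hTfin : T.toFinset.Nonempty := by
            cases T with
            | nil => exact absurd rfl hTne
            | cons a l => exact ⟨a, by simp⟩
          obtain ⟨P0, hP0fin, hP0min⟩ := Finset.exists_min_image T.toFinset (fun P => P.1) hTfin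
          have hP0mem : P0 ∈ T := List.mem_toFinset.1 hP0fin
          have hP0min' : ∀ Q ∈ T, P0.1 ≤ Q.1 := fun Q hQ => hP0min Q (List.mem_toFinset.2 hQ)
          have hwnodup : (T.map fun P => P.2.2.1).Nodup := by
            rw [List.Nodup, List.pairwise_map]
            exact hId.imp_of_mem (fun ha hb h => h.2 (hall _ ha) (hall _ hb))
          have hScard : ((T.map fun P => P.2.2.1).toFinset).card = k' := by
            rw [List.toFinset_card_of_nodup hwnodup, List.length_map]
            exact hTfull
          have hSsub : (T.map fun P => P.2.2.1).toFinset ⊆ NhatMinus θ rs i \ W := by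
            intro u hu
            rw [List.mem_toFinset, List.mem_map] at hu
            obtain ⟨P, hP, rfl⟩ := hu
            obtain ⟨h1, h2, _⟩ := hIc P hP (hall P hP)
            have hNh : P.2.2.1 ∈ Nhat θ rs := by
              rw [← mem_prioList (θ := θ) (rs := rs), hp]
              exact List.mem_append_left _ h1
            rw [Finset.mem_sdiff]
            refine ⟨?_, h2⟩
            rw [NhatMinus, Finset.mem_sdiff]
            exact ⟨hNh, not_mem_desc_of_before hp h1⟩
          have hSval : ∀ u ∈ (T.map fun P => P.2.2.1).toFinset, P0.1 ≤ (θ u).1 := by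
            intro u hu
            rw [List.mem_toFinset, List.mem_map] at hu
            obtain ⟨P, hP, rfl⟩ := hu
            exact le_trans (hP0min' P hP) (hIc P hP (hall P hP)).2.2
          have hxmin : (P0.1 : ℝ≥0∞) ≤
              kthHighest ((NhatMinus θ rs i \ W).val.map fun j => (θ j).1) k' :=
            le_kth_of_subset _ _ _ hk' hSsub (le_of_eq hScard.symm) hSval
          have hxi : P0.1 ≤ (θ i).1 := by
            have := le_trans hxmin hwin
            exact_mod_cast this
          obtain ⟨T1, T2, hTsplit⟩ := List.append_of_mem hP0mem
          have hperm : T.Perm (P0 :: (T1 ++ T2)) := by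
            rw [hTsplit]; exact List.perm_middle
          have hsubT : (T1 ++ T2).Sublist T := by
            rw [hTsplit]
            exact (List.sublist_cons_self P0 T2).append_left T1
          have hlenT : T.length = (T1 ++ T2).length + 1 := by
            rw [hTsplit]; simp [List.length_append]; omega
          have hmem' : ∀ Q ∈ T1 ++ T2, Q ∈ T := fun Q hQ => hsubT.subset hQ
          have hIH := ih (done ++ [i]) (insert i W) (k' - 1) (T1 ++ T2) hp' hW'
            (by omega)
            (by
              intro P hP
              have hPT := hmem' P hP
              have h1 := hIb P hPT
              refine ⟨?_, h1.2⟩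
              rcases List.mem_cons.1 h1.1 with h | h
              · exact absurd ⟨P, hPT, h⟩ hhold
              · exact h)
            (by
              intro P hP hPf
              obtain ⟨h1, h2, h3⟩ := hIc P (hmem' P hP) hPf
              refine ⟨List.mem_append_left _ h1, ?_, h3⟩
              intro hcon
              rcases Finset.mem_insert.1 hcon with h | h
              · exact hiDone (h ▸ h1)
              · exact h2 h)
            (hId.sublist hsubT)
            (fun P hP => hIe P (hmem' P hP))
            (by
              rintro ⟨P, hP, hPt⟩
              exact absurd (hall P (hmem' P hP)) (by rw [hPt]; simp))
            hIg'
          have hsums : ((T.map fun P => P.1).sum : ℝ≥0)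
              = P0.1 + ((T1 ++ T2).map fun P => P.1).sum := by
            rw [(hperm.map (fun P => P.1)).sum_eq, List.map_cons, List.sum_cons]
          rw [hsums]
          exact add_le_add hxi hIH
        · -- case A2
          have hIH := ih (done ++ [i]) (insert i W) (k' - 1) T hp' hW'
            (by omega)
            (by
              intro P hP
              have h1 := hIb P hP
              refine ⟨?_, h1.2⟩
              rcases List.mem_cons.1 h1.1 with h | h
              · exact absurd ⟨P, hP, h⟩ hhold
              · exact h)
            (by
              intro P hP hPf
              obtain ⟨h1, h2, h3⟩ := hIc P hP hPf
              refine ⟨List.mem_append_left _ h1, ?_, h3⟩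
              intro hcon
              rcases Finset.mem_insert.1 hcon with h | h
              · exact hiDone (h ▸ h1)
              · exact h2 h)
            hId hIe
            (by
              rintro h b hb
              rcases hIf h b hb with h' | h'
              · exact Or.inl (List.mem_append_left _ h')
              · exact Or.inr h')
            hIg'
          exact le_trans hIH le_add_self
    · -- i loses
      have hlt : ((θ i).1 : ℝ≥0∞) <
          kthHighest ((NhatMinus θ rs i \ W).val.map fun j => (θ j).1) k' := by
        rw [add_zero] at hwin
        exact lt_of_not_ge hwin
      have hsum := surplus_cons_lose (θ := θ) (rs := rs) 0 hiRest hwin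
      rw [hsum]
      have hp' : prioList θ rs = (done ++ [i]) ++ rest := by
        rw [hp, List.append_assoc]; rfl
      have hW' : ∀ b ∈ W, b ∈ done ++ [i] := fun b hb => List.mem_append_left _ (hW b hb)
      have hIg' : ∀ j ∈ done ++ [i], j ∉ W → ((θ j).1 : ℝ≥0∞) <
          kthHighest ((NhatMinus θ rs j \ W).val.map fun b => (θ b).1) k' := by
        intro j hj hjW
        rcases List.mem_append.1 hj with h | h
        · exact hIg j h hjW
        · rw [List.mem_singleton.1 h]; exact hlt
      have hTnodup : T.Nodup :=
        hId.imp_of_mem (fun _ _ h => fun heq => h.1 (by rw [heq]))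
      have hHolderNe : ∀ P ∈ T, ∀ Q ∈ T, P ≠ Q → P.2.1 ≠ Q.2.1 := by
        have hpw : T.Pairwise (fun P Q => P.2.1 ≠ Q.2.1) := hId.imp (fun h => h.1)
        intro P hP Q hQ hne
        haveI : Std.Symm (fun P Q : ℝ≥0 × N × N × Bool => P.2.1 ≠ Q.2.1) := ⟨fun _ _ h => Ne.symm h⟩
        exact hpw.forall hP hQ hne
      by_cases hhold : ∃ P ∈ T, P.2.1 = i
      · -- re-match the pair held by i
        obtain ⟨P0, hP0mem, hP0i⟩ := hhold
        have hk' : k' ≠ 0 := by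
          have : 1 ≤ T.length := List.length_pos_iff.2 (by rintro rfl; exact List.not_mem_nil hP0mem)
          omega
        obtain ⟨T1, T2, hTsplit⟩ := List.append_of_mem hP0mem
        have hperm : T.Perm (P0 :: (T1 ++ T2)) := by
          rw [hTsplit]; exact List.perm_middle
        have hsubT : (T1 ++ T2).Sublist T := by
          rw [hTsplit]
          exact (List.sublist_cons_self P0 T2).append_left T1
        have hP0notT' : P0 ∉ T1 ++ T2 := by
          have hnd := hTnodup
          rw [hTsplit, List.nodup_append] at hnd
          obtain ⟨h1, h2, h3⟩ := hnd
          intro hmem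
          rcases List.mem_append.1 hmem with h | h
          · exact h3 _ h _ List.mem_cons_self rfl
          · exact (List.nodup_cons.1 h2).1 h
        have hlenT : T.length = (T1 ++ T2).length + 1 := by
          rw [hTsplit]; simp [List.length_append]; omega
        have hmem' : ∀ Q ∈ T1 ++ T2, Q ∈ T := fun Q hQ => hsubT.subset hQ
        have hQne : ∀ Q ∈ T1 ++ T2, Q ≠ P0 := fun Q hQ heq => hP0notT' (heq ▸ hQ)
        have hback : ∀ Q ∈ T, Q ≠ P0 → Q ∈ T1 ++ T2 := by
          intro Q hQ hne
          rw [hTsplit] at hQ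
          rcases List.mem_append.1 hQ with h | h
          · exact List.mem_append_left _ h
          · rcases List.mem_cons.1 h with h' | h'
            · exact absurd h' hne
            · exact List.mem_append_right _ h'
        have hHcard : (((T1 ++ T2).map fun P => P.2.1).toFinset).card ≤ k' - 1 := by
          calc (((T1 ++ T2).map fun P => P.2.1).toFinset).card
              ≤ ((T1 ++ T2).map fun P => P.2.1).length := List.toFinset_card_le _
            _ = (T1 ++ T2).length := List.length_map _
            _ ≤ k' - 1 := by omega
        obtain ⟨c, hcrest, hcH, hcval⟩ := exists_candidate hk' hp hW hIg hlt _ hHcard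
        have hcnotholder : ∀ Q ∈ T1 ++ T2, Q.2.1 ≠ c := by
          intro Q hQ hcon
          exact hcH (List.mem_toFinset.2 (List.mem_map.2 ⟨Q, hQ, hcon⟩))
        have hP0x : P0.1 ≤ (θ i).1 := by
          have := (hIb P0 hP0mem).2
          rwa [hP0i] at this
        have hxc : P0.1 ≤ (θ c).1 := by
          have h1 : ((θ i).1 : ℝ≥0∞) ≤ ((θ c).1 : ℝ≥0∞) := le_trans (le_of_lt hlt) hcval
          have h2 : (θ i).1 ≤ (θ c).1 := by exact_mod_cast h1
          exact le_trans hP0x h2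
        have hIH := ih (done ++ [i]) W k' ((P0.1, c, i, false) :: (T1 ++ T2)) hp' hW'
          (by simp only [List.length_cons]; omega)
          (by
            intro P hP
            rcases List.mem_cons.1 hP with h | h
            · subst h
              exact ⟨hcrest, hxc⟩
            · have hPT := hmem' P h
              have h1 := hIb P hPT
              refine ⟨?_, h1.2⟩
              rcases List.mem_cons.1 h1.1 with h' | h'
              · exact absurd (by rw [h', hP0i] : P.2.1 = P0.2.1)
                  (hHolderNe P hPT P0 hP0mem (hQne P h))
              · exact h')
          (by
            intro P hP hPf
            rcases List.mem_cons.1 hP with h | h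
            · subst h
              exact ⟨List.mem_append_right _ (List.mem_singleton_self i), hiW, hP0x⟩
            · obtain ⟨h1, h2, h3⟩ := hIc P (hmem' P h) hPf
              exact ⟨List.mem_append_left _ h1, h2, h3⟩)
          (by
            rw [List.pairwise_cons]
            constructor
            · intro Q hQ
              refine ⟨fun hcon => hcnotholder Q hQ hcon.symm, ?_⟩
              intro _ hQf hcon
              obtain ⟨h1, _, _⟩ := hIc Q (hmem' Q hQ) hQf
              have hci : i = Q.2.2.1 := hcon
              rw [← hci] at h1
              exact hiDone h1
            · exact hId.sublist hsubT)
          (by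
            intro P hP hPt
            rcases List.mem_cons.1 hP with h | h
            · rw [h] at hPt; simp at hPt
            · exact hIe P (hmem' P h) hPt)
          (by
            rintro ⟨P, hP, hPt⟩ b hb
            have hPT : P ∈ T := by
              rcases List.mem_cons.1 hP with h | h
              · rw [h] at hPt; simp at hPt
              · exact hmem' P h
            rcases hIf ⟨P, hPT, hPt⟩ b hb with h | ⟨Q, hQ, hQb⟩
            · exact Or.inl (List.mem_append_left _ h)
            · by_cases hQP0 : Q = P0
              · subst hQP0
                rw [hP0i] at hQb
                exact Or.inl (List.mem_append_right _ (hQb ▸ List.mem_singleton_self i))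
              · exact Or.inr ⟨Q, List.mem_cons_of_mem _ (hback Q hQ hQP0), hQb⟩)
          hIg'
        have hsums : ((T.map fun P => P.1).sum : ℝ≥0)
            = (((P0.1, c, i, false) :: (T1 ++ T2)).map fun P => P.1).sum := by
          rw [(hperm.map (fun P => P.1)).sum_eq]
          simp
        rw [hsums]
        exact hIH
      · -- i not a holder : nothing changes
        have hIH := ih (done ++ [i]) W k' T hp' hW' hlen
          (by
            intro P hP
            have h1 := hIb P hP
            refine ⟨?_, h1.2⟩
            rcases List.mem_cons.1 h1.1 with h | h
            · exact absurd ⟨P, hP, h⟩ hhold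
            · exact h)
          (by
            intro P hP hPf
            obtain ⟨h1, h2, h3⟩ := hIc P hP hPf
            exact ⟨List.mem_append_left _ h1, h2, h3⟩)
          hId hIe
          (by
            rintro h b hb
            rcases hIf h b hb with h' | h'
            · exact Or.inl (List.mem_append_left _ h')
            · exact Or.inr h')
          hIg'
        exact hIH

lemma kthHighest_singleton (x : ℝ≥0) : kthHighest {x} 1 = (x : ℝ≥0∞) := by
  unfold kthHighest
  rw [if_neg one_ne_zero, if_neg (by simp)]
  have hcard : (Multiset.sort ({x} : Multiset ℝ≥0) (· ≤ ·)).length = 1 := by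
    rw [Multiset.length_sort]; simp
  have hperm : ((Multiset.sort ({x} : Multiset ℝ≥0) (· ≤ ·)) : Multiset ℝ≥0) = {x} :=
    Multiset.sort_eq _ _
  obtain ⟨a, ha⟩ : ∃ a, Multiset.sort ({x} : Multiset ℝ≥0) (· ≤ ·) = [a] := by
    cases hl : Multiset.sort ({x} : Multiset ℝ≥0) (· ≤ ·) with
    | nil => rw [hl] at hcard; simp at hcard
    | cons a l =>
      rw [hl] at hcard
      simp at hcard
      exact ⟨a, by rw [hcard]⟩
  rw [ha] at hperm ⊢
  have : a = x := by
    have := hperm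
    rw [show (([a] : List ℝ≥0) : Multiset ℝ≥0) = {a} from rfl] at this
    exact Multiset.singleton_inj.1 this
  subst this
  rfl

section Example

def θex : Profile (Fin 2) := ![(1, ∅), (5, ∅)]
def rsex : Finset (Fin 2) := Finset.univ

lemma hconn : ∀ i, Connected θex rsex i := fun i => ⟨0, Finset.mem_univ i⟩

lemma hNhat : Nhat θex rsex = Finset.univ := by
  unfold Nhat
  rw [Finset.filter_true_of_mem (fun i _ => hconn i)]

lemma hdesc (i : Fin 2) : desc θex rsex i = {i} := by
  unfold desc
  ext j
  simp only [Finset.mem_filter, Finset.mem_univ, true_and, Finset.mem_singleton]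
  constructor
  · rintro ⟨_, h | h⟩
    · exact h
    · exfalso
      obtain ⟨_, _, hne, hnav⟩ := h
      exact hnav ⟨0, Finset.mem_univ j, fun hc => hne hc.symm⟩
  · rintro rfl
    exact ⟨hconn j, Or.inl rfl⟩

lemma hNM0 : NhatMinus θex rsex 0 = {1} := by
  unfold NhatMinus
  rw [hNhat, hdesc]
  decide

lemma hNM1 : NhatMinus θex rsex 1 = {0} := by
  unfold NhatMinus
  rw [hNhat, hdesc]
  decide

lemma hdNet (i : Fin 2) : dNet θex rsex i = 1 := by
  unfold dNet
  apply le_antisymm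
  · apply sInf_le
    exact ⟨0, Finset.mem_univ i, by norm_num⟩
  · apply le_sInf
    rintro n ⟨m, _, rfl⟩
    calc (1 : ℕ∞) = 0 + 1 := by norm_num
      _ ≤ (m : ℕ∞) + 1 := add_le_add_left zero_le 1

lemma hprio : prioList θex rsex = [0, 1] := by
  unfold prioList
  rw [hNhat]
  have hsort : ((Finset.univ : Finset (Fin 2)).sort (· ≤ ·)) = [0, 1] := by
    have h : (Finset.univ : Finset (Fin 2)) = insert 0 {1} := by decide
    rw [h, Finset.sort_insert, Finset.sort_singleton]
    · intro b hb
      simp at hb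
      subst hb
      decide
    · decide
  rw [hsort]
  apply List.mergeSort_of_pairwise
  refine List.pairwise_cons.2 ⟨?_, List.pairwise_singleton _ _⟩
  intro b _
  rw [decide_eq_true_eq, hdNet, hdNet]

lemma hmap0 : ((NhatMinus θex rsex 0 \ ∅).val.map fun j => (θex j).1) + 0 = ({5} : Multiset ℝ≥0) := by
  rw [add_zero, Finset.sdiff_empty, hNM0]
  rfl

lemma hmap1 : ((NhatMinus θex rsex 1 \ ∅).val.map fun j => (θex j).1) + 0 = ({1} : Multiset ℝ≥0) := by
  rw [add_zero, Finset.sdiff_empty, hNM1]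
  rfl

lemma hrun : (DBM 1 θex rsex).1 = fun j => if j = 1 then 1 else 0 := by
  unfold DBM
  rw [hprio]
  show (runAux θex rsex 0 [0, 1] ∅ 1).1 = _
  have hc0 : ¬ ((((θex 0).1 : ℝ≥0∞)) ≥
      kthHighest (((NhatMinus θex rsex 0 \ ∅).val.map fun j => (θex j).1) + 0) 1) := by
    rw [hmap0, kthHighest_singleton]
    intro h
    have : (5 : ℝ≥0) ≤ (θex 0).1 := by exact_mod_cast h
    have h1 : (θex 0).1 = 1 := rfl
    rw [h1] at this
    norm_num at this
  have hc1 : ((((θex 1).1 : ℝ≥0∞)) ≥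
      kthHighest (((NhatMinus θex rsex 1 \ ∅).val.map fun j => (θex j).1) + 0) 1) := by
    rw [hmap1, kthHighest_singleton]
    have h1 : (θex 1).1 = 5 := rfl
    rw [h1]
    exact_mod_cast (by norm_num : (1 : ℝ≥0) ≤ 5)
  funext j
  simp only [runAux]
  rw [if_neg hc0]
  simp only [runAux]
  rw [if_pos hc1]
  simp only [runAux]
  fin_cases j <;> rfl

theorem aux_part2 : ∃ (n k : ℕ) (θ : Profile (Fin n)) (rs : Finset (Fin n)),
    ∑ i, ((θ i).1 : ℝ) * ((FCFS k θ rs).1 i : ℝ) <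
      ∑ i, ((θ i).1 : ℝ) * ((DBM k θ rs).1 i : ℝ) := by
  refine ⟨2, 1, θex, rsex, ?_⟩
  have hF : (FCFS 1 θex rsex).1 = fun j => if j = 0 then 1 else 0 := by
    funext j
    show (if j ∈ (prioList θex rsex).take 1 then 1 else 0) = _
    rw [hprio]
    fin_cases j <;> simp
  rw [hF, hrun]
  rw [Fin.sum_univ_two, Fin.sum_univ_two]
  have h0 : (θex 0).1 = 1 := rfl
  have h1 : (θex 1).1 = 5 := rfl
  rw [h0, h1]
  norm_num

end Example

theorem aux_part1 {M : Type} [Fintype M] [DecidableEq M] [LinearOrder M] (k : ℕ) (θ : Profile M)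
    (rs : Finset M) :
    ∑ i, ((θ i).1 : ℝ) * ((FCFS k θ rs).1 i : ℝ) ≤
      ∑ i, ((θ i).1 : ℝ) * ((DBM k θ rs).1 i : ℝ) := by
  classical
  set tk := (prioList θ rs).take k with htk
  have htknd : tk.Nodup := (prioList_nodup).sublist (List.take_sublist _ _)
  set T : List (ℝ≥0 × M × M × Bool) := tk.map (fun b => ((θ b).1, b, b, true)) with hT
  have hkey : (T.map fun P => P.1).sum ≤
      ∑ j, (θ j).1 * (((runAux θ rs 0 (prioList θ rs) ∅ k).1 j : ℕ) : ℝ≥0) := by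
    apply core k (prioList θ rs) [] ∅ k T
    · simp
    · simp
    · rw [hT, List.length_map, htk]
      exact le_trans (List.length_take_le _ _) le_rfl
    · intro P hP
      rw [hT, List.mem_map] at hP
      obtain ⟨b, hb, rfl⟩ := hP
      exact ⟨List.mem_of_mem_take hb, le_refl _⟩
    · intro P hP hPf
      rw [hT, List.mem_map] at hP
      obtain ⟨b, hb, rfl⟩ := hP
      simp at hPf
    · rw [hT, List.pairwise_map]
      have : tk.Pairwise (· ≠ ·) := htknd
      exact this.imp (fun h => ⟨h, fun h1 _ => by simp at h1⟩)
    · intro P hP _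
      rw [hT, List.mem_map] at hP
      obtain ⟨b, hb, rfl⟩ := hP
      exact hb
    · intro _ b hb
      exact Or.inr ⟨((θ b).1, b, b, true), List.mem_map.2 ⟨b, hb, rfl⟩, rfl⟩
    · intro j hj
      exact absurd hj List.not_mem_nil
  have hfc : (T.map fun P => P.1).sum = ∑ j, (θ j).1 * (((FCFS k θ rs).1 j : ℕ) : ℝ≥0) := by
    have h1 : (T.map fun P => P.1) = tk.map (fun b => (θ b).1) := by
      rw [hT, List.map_map]; rfl
    rw [h1]
    have h3 : ∑ j, (θ j).1 * (((FCFS k θ rs).1 j : ℕ) : ℝ≥0)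
        = ∑ j ∈ tk.toFinset, (θ j).1 := by
      have h2 : ∀ j : M, (θ j).1 * (((FCFS k θ rs).1 j : ℕ) : ℝ≥0)
          = if j ∈ tk.toFinset then (θ j).1 else 0 := by
        intro j
        simp only [FCFS, htk, List.mem_toFinset]
        split_ifs <;> simp
      rw [Finset.sum_congr rfl (fun j _ => h2 j), Finset.sum_ite_mem,
        Finset.univ_inter]
    rw [h3, List.sum_toFinset _ htknd]
  have hfinal : ∑ j, (θ j).1 * (((FCFS k θ rs).1 j : ℕ) : ℝ≥0)
      ≤ ∑ j, (θ j).1 * (((DBM k θ rs).1 j : ℕ) : ℝ≥0) := by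
    rw [← hfc]
    exact hkey
  have := NNReal.coe_le_coe.2 hfinal
  push_cast at this
  convert this using 2 <;> norm_num

end AuxProof

/-- The distance-based mechanism dominates FCFS-F in terms of social
surplus (for every set of buyers and every reported profile), but not vice versa: there
is an instance where the inequality is strict. -/
theorem distanceBased_dominates_FCFS_surplus :
    (∀ (M : Type) [Fintype M] [DecidableEq M] [LinearOrder M] (k : ℕ) (θ : Profile M)
        (rs : Finset M),
      ∑ i, ((θ i).1 : ℝ) * ((FCFS k θ rs).1 i : ℝ) ≤
        ∑ i, ((θ i).1 : ℝ) * ((DBM k θ rs).1 i : ℝ)) ∧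
    (∃ (n k : ℕ) (θ : Profile (Fin n)) (rs : Finset (Fin n)),
      ∑ i, ((θ i).1 : ℝ) * ((FCFS k θ rs).1 i : ℝ) <
        ∑ i, ((θ i).1 : ℝ) * ((DBM k θ rs).1 i : ℝ)) := by
  constructor
  · intro M _ _ _ k θ rs
    exact aux_part1 k θ rs
  · exact aux_part2

end SNA
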